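/- Let R be a unital associative algebra over a field F, let q ∈ F with q ≠ 0, and let A, B ∈ R satisfy A·B − q·B·A = 1. Suppose q^p = 1 and {p}_q = 0 for some positive integer p. Then the element (A·B − B·A)^p is central in the subalgebra generated by A and B; that is, (AB−BA)^p commutes with both A and B. -/

import Mathlib

theorem Cpow_p_central {F : Type*} [Field F] {R : Type*} [Ring R] [Algebra F R]
    (q : F) (hq0 : q ≠ 0) (A B : R) (h : A * B - q • (B * A) = 1)
    (p : ℕ) (hp : 0 < p) (hqp : q ^ p = 1)
    (hsum : (∑ i ∈ Finset.range p, q ^ i) = 0) :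
    (A * B - B * A) ^ p * A = A * (A * B - B * A) ^ p ∧
      (A * B - B * A) ^ p * B = B * (A * B - B * A) ^ p := by
  have hAB : A * B = 1 + q • (B * A) := sub_eq_iff_eq_add.mp h
  have hABA : A * (B * A) = A + q • ((B * A) * A) := by
    rw [← mul_assoc, hAB, add_mul, one_mul, smul_mul_assoc]
  have hBAB : (B * A) * B = B + q • (B * (B * A)) := by
    rw [mul_assoc, hAB, mul_add, mul_one, mul_smul_comm]
  have key1 : A * (A * B - B * A) = q • ((A * B - B * A) * A) := by
    simp only [mul_sub, sub_mul, hAB, mul_add, add_mul, one_mul, mul_one,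
      mul_smul_comm, smul_mul_assoc, hABA]
    module
  have key2 : (A * B - B * A) * B = q • (B * (A * B - B * A)) := by
    simp only [mul_sub, sub_mul, hAB, mul_add, add_mul, one_mul, mul_one,
      mul_smul_comm, smul_mul_assoc, hBAB]
    module
  set C := A * B - B * A with hC
  have pow1 : ∀ n : ℕ, A * C ^ n = q ^ n • (C ^ n * A) := by
    intro n
    induction n with
    | zero => simp
    | succ n ih =>
      rw [pow_succ', ← mul_assoc, key1, smul_mul_assoc, mul_assoc, ih,
        mul_smul_comm, smul_smul, ← mul_assoc, ← pow_succ']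
  have pow2 : ∀ n : ℕ, C ^ n * B = q ^ n • (B * C ^ n) := by
    intro n
    induction n with
    | zero => simp
    | succ n ih =>
      rw [pow_succ, mul_assoc, key2, mul_smul_comm, ← mul_assoc, ih,
        smul_mul_assoc, smul_smul, mul_assoc, ← pow_succ, ← pow_succ']
  constructor
  · rw [pow1 p, hqp, one_smul]
  · rw [pow2 p, hqp, one_smul]
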